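/- Suppose 2 ≤ ℓ, 0 ≤ k < d, d ≥ 2, and suppose K ⊆ [0,1]^d is a compact set intersecting every k-dimensional affine subspace of ℝ^d that meets [0,1]^d, such that the ℓ-fold sumset ℓK is nowhere dense in ℝ^d. Then k > ((ℓ−1)/ℓ)·(d−1). -/

import Mathlib

open Set Module

/-- The unit cube `[0,1]^d`. -/
def unitCube (d : ℕ) : Set (EuclideanSpace ℝ (Fin d)) :=
  {x | ∀ i, x i ∈ Set.Icc (0 : ℝ) 1}

/-- The `ℓ`-fold sumset `ℓK = {k₁ + ⋯ + k_ℓ : kᵢ ∈ K}`. -/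
def msum {E : Type*} [AddCommMonoid E] (ℓ : ℕ) (K : Set E) : Set E :=
  {x | ∃ f : Fin ℓ → E, (∀ i, f i ∈ K) ∧ ∑ i, f i = x}

namespace NonexAux

variable {d : ℕ}

lemma coordSum {ι : Type*} (s : Finset ι) (f : ι → EuclideanSpace ℝ (Fin d)) (j : Fin d) :
    (∑ i ∈ s, f i) j = ∑ i ∈ s, f i j := by
  induction s using Finset.cons_induction with
  | empty => rfl
  | cons a s ha ih => rw [Finset.sum_cons, Finset.sum_cons, ← ih]; rfl

lemma distLeSum (x p : EuclideanSpace ℝ (Fin d)) : dist x p ≤ ∑ j, |x j - p j| := by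
  have hxp : x - p = ∑ j, (x j - p j) • EuclideanSpace.single j (1:ℝ) := by
    ext j
    rw [coordSum]
    rw [Finset.sum_eq_single j]
    · simp [EuclideanSpace.single_apply]
    · intro b _ hb
      show (x b - p b) * (EuclideanSpace.single b (1:ℝ)) j = 0
      simp [EuclideanSpace.single_apply, Ne.symm hb]
    · simp
  calc dist x p = ‖x - p‖ := dist_eq_norm x p
    _ = ‖∑ j, (x j - p j) • EuclideanSpace.single j (1:ℝ)‖ := by rw [hxp]
    _ ≤ ∑ j, ‖(x j - p j) • EuclideanSpace.single j (1:ℝ)‖ := norm_sum_le _ _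
    _ = ∑ j, |x j - p j| := by
        refine Finset.sum_congr rfl fun j _ => ?_
        rw [norm_smul, EuclideanSpace.norm_single]
        simp [Real.norm_eq_abs]

lemma liOfCoords {n : ℕ} (w : Fin n → EuclideanSpace ℝ (Fin d)) (c : Fin n → Fin d)
    (h : ∀ r r', w r (c r') = if r = r' then 1 else 0) : LinearIndependent ℝ w := by
  rw [linearIndependent_iff']
  intro s g hsum i hi
  have h2 := congrArg (fun z : EuclideanSpace ℝ (Fin d) => z (c i)) hsum
  simp only at h2
  rw [coordSum] at h2
  have h3 : ∀ r ∈ s, (g r • w r) (c i) = if r = i then g r else 0 := by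
    intro r _
    show g r * w r (c i) = _
    rw [h r i]
    by_cases hri : r = i <;> simp [hri]
  rw [Finset.sum_congr rfl h3, Finset.sum_ite_eq' s i g] at h2
  simpa [hi] using h2

/-- Any point of a face of the cube of dimension `≤ d - k - 1` belongs to `K`. -/
lemma faceSub {k : ℕ} (hk : k < d) (K : Set (EuclideanSpace ℝ (Fin d)))
    (hcpt : IsCompact K) (hsub : K ⊆ unitCube d)
    (hhit : ∀ V : AffineSubspace ℝ (EuclideanSpace ℝ (Fin d)), V ≠ ⊥ →
      finrank ℝ V.direction = k →
      ((V : Set _) ∩ unitCube d).Nonempty → (K ∩ (V : Set _)).Nonempty)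
    (S : Finset (Fin d)) (hcard : S.card + k + 1 ≤ d)
    (x : EuclideanSpace ℝ (Fin d)) (hxS : ∀ j ∈ S, x j ∈ Icc (0:ℝ) 1)
    (hx0 : ∀ j, j ∉ S → x j = 0) : x ∈ K := by
  classical
  have hKcl : IsClosed K := hcpt.isClosed
  rw [← hKcl.closure_eq]
  rw [Metric.mem_closure_iff]
  intro ε hε
  -- choose δ
  set A : ℝ := ((d * (k + 2) : ℕ) : ℝ) with hA
  have hA1 : (0:ℝ) < A + 1 := by positivity
  set δ : ℝ := min 1 (ε / (A + 1)) with hδdef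
  have hδpos : 0 < δ := lt_min one_pos (by positivity)
  have hδ1 : δ ≤ 1 := min_le_left _ _
  have hδε : A * δ ≤ A * (ε / (A + 1)) := by
    apply mul_le_mul_of_nonneg_left (min_le_right _ _)
    positivity
  have hAδε : A * δ < ε := by
    refine lt_of_le_of_lt hδε ?_
    rw [mul_div_assoc']
    rw [div_lt_iff₀ hA1]
    have : A < A + 1 := by linarith
    nlinarith [hε]
  -- choose injection into the complement of S
  have hcompl : k + 1 ≤ Sᶜ.card := by
    have := Finset.card_compl S (α := Fin d)
    rw [this, Fintype.card_fin]
    omega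
  obtain ⟨N, hNsub, hNcard⟩ := Finset.exists_subset_card_eq hcompl
  have hexι : ∃ ι : Fin (k+1) → Fin d, Function.Injective ι ∧ ∀ r, ι r ∉ S := by
    refine ⟨fun r => (N.equivFin.symm (finCongr hNcard.symm r) : Fin d), ?_, ?_⟩
    · intro a b hab
      have h1 := Subtype.val_injective hab
      have h2 := N.equivFin.symm.injective h1
      exact (finCongr hNcard.symm).injective h2
    · intro r
      have := hNsub (N.equivFin.symm (finCongr hNcard.symm r)).2
      simpa [Finset.mem_compl] using this
  obtain ⟨ι, hιinj, hιnotS⟩ := hexι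
  clear_value A δ
  -- the base point q and direction span
  set q : EuclideanSpace ℝ (Fin d) := WithLp.toLp 2 (fun j => if j ∈ S then x j else δ) with hqdef
  set v : Fin k → EuclideanSpace ℝ (Fin d) :=
    fun r => EuclideanSpace.single (ι r.succ) 1 - EuclideanSpace.single (ι 0) 1 with hvdef
  have hvcoord : ∀ (r : Fin k) (j : Fin d),
      v r j = (if j = ι r.succ then (1:ℝ) else 0) - (if j = ι 0 then 1 else 0) := by
    intro r j
    show (EuclideanSpace.single (ι r.succ) (1:ℝ)) j - (EuclideanSpace.single (ι 0) (1:ℝ)) j = _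
    rw [EuclideanSpace.single_apply (𝕜 := ℝ), EuclideanSpace.single_apply (𝕜 := ℝ)]
  have hli : LinearIndependent ℝ v := by
    apply liOfCoords v (fun r => ι r.succ)
    intro r r'
    rw [hvcoord]
    have h1 : (ι r'.succ = ι r.succ) ↔ (r = r') := by
      constructor
      · intro h; have := hιinj h; exact (Fin.succ_injective _ this).symm
      · intro h; rw [h]
    have h2 : ι r'.succ ≠ ι 0 := by
      intro h; exact (Fin.succ_ne_zero r') (hιinj h)
    by_cases hrr : r = r' <;> simp [hrr, h1, h2]
  set W : Submodule ℝ (EuclideanSpace ℝ (Fin d)) := Submodule.span ℝ (Set.range v) with hWdef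
  set V : AffineSubspace ℝ (EuclideanSpace ℝ (Fin d)) := AffineSubspace.mk' q W with hVdef
  have hqV : q ∈ V := AffineSubspace.self_mem_mk' q W
  clear_value q
  have hVbot : V ≠ ⊥ := by
    intro h
    rw [h] at hqV
    exact absurd hqV (AffineSubspace.notMem_bot _ _ _)
  have hVrank : finrank ℝ V.direction = k := by
    rw [hVdef, AffineSubspace.direction_mk']
    rw [hWdef, finrank_span_eq_card hli, Fintype.card_fin]
  have hqcube : q ∈ unitCube d := by
    intro j
    rw [hqdef]
    by_cases hj : j ∈ S
    · simpa [hj] using hxS j hj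
    · simp only [hj, if_false]
      exact ⟨le_of_lt hδpos, hδ1⟩
  obtain ⟨p, hpK, hpV⟩ := hhit V hVbot hVrank ⟨q, hqV, hqcube⟩
  refine ⟨p, hpK, ?_⟩
  -- extract coefficients
  rw [AffineSubspace.mem_coe, hVdef, AffineSubspace.mem_mk'] at hpV
  rw [hWdef] at hpV
  obtain ⟨t, ht⟩ := (Submodule.mem_span_range_iff_exists_fun ℝ).mp hpV
  have hcoord : ∀ j : Fin d, p j - q j =
      ∑ r : Fin k, t r * ((if j = ι r.succ then (1:ℝ) else 0) - (if j = ι 0 then 1 else 0)) := by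
    intro j
    have := congrArg (fun z : EuclideanSpace ℝ (Fin d) => z j) ht
    simp only at this
    rw [coordSum] at this
    have h4 : ∀ r ∈ Finset.univ, (t r • v r) j
        = t r * ((if j = ι r.succ then (1:ℝ) else 0) - (if j = ι 0 then 1 else 0)) := by
      intro r _
      show t r * v r j = _
      rw [hvcoord]
    rw [Finset.sum_congr rfl h4] at this
    rw [show p j - q j = (p -ᵥ q) j from rfl]
    exact this.symm
  have hpcube := hsub hpK
  clear ht hpV hli hvcoord hWdef hVdef hqV hVbot hVrank hcompl hNsub hNcard hδdef hδε
  -- coordinates at ι values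
  have hpS : ∀ j ∈ S, p j = x j := by
    intro j hj
    have h5 := hcoord j
    have h6 : ∀ r : Fin k, (if j = ι r.succ then (1:ℝ) else 0) - (if j = ι 0 then 1 else 0) = 0 := by
      intro r
      have e1 : j ≠ ι r.succ := fun h => hιnotS r.succ (h ▸ hj)
      have e2 : j ≠ ι 0 := fun h => hιnotS 0 (h ▸ hj)
      simp [e1, e2]
    simp only [h6, mul_zero, Finset.sum_const_zero] at h5
    have : q j = x j := by rw [hqdef]; simp [hj]
    linarith [h5]
  have hsucc_ne : ∀ m : Fin k, ι m.succ ≠ ι 0 := fun m h => (Fin.succ_ne_zero m) (hιinj h)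
  have hqι : ∀ r : Fin (k+1), q (ι r) = δ := by
    intro r; rw [hqdef]; simp [hιnotS r]
  have htm : ∀ m : Fin k, t m = p (ι m.succ) - δ := by
    intro m
    have h5 := hcoord (ι m.succ)
    rw [hqι] at h5
    rw [Finset.sum_eq_single m] at h5
    · rw [if_pos rfl, if_neg (hsucc_ne m)] at h5; linarith
    · intro b _ hb
      have e1 : ι m.succ ≠ ι b.succ := fun h =>
        hb (Fin.succ_injective _ (hιinj h)).symm
      rw [if_neg e1, if_neg (hsucc_ne m)]; ring
    · simp
  have hsum_t : ∑ m, t m = δ - p (ι 0) := by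
    have h5 := hcoord (ι 0)
    rw [hqι] at h5
    have h6 : ∀ r ∈ Finset.univ,
        t r * ((if ι 0 = ι r.succ then (1:ℝ) else 0) - (if ι 0 = ι 0 then 1 else 0))
        = -(t r) := by
      intro r _
      rw [if_neg (fun h => hsucc_ne r h.symm), if_pos rfl]; ring
    rw [Finset.sum_congr rfl h6, Finset.sum_neg_distrib] at h5
    linarith
  have hp01 : ∀ j, p j ∈ Icc (0:ℝ) 1 := hsub hpK
  have ht_lb : ∀ m : Fin k, -δ ≤ t m := by
    intro m
    have := (hp01 (ι m.succ)).1
    rw [htm m]; linarith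
  have hsum_le : ∑ m, t m ≤ δ := by
    have := (hp01 (ι 0)).1
    rw [hsum_t]; linarith
  have hsum_lb : -((k:ℝ) * δ) ≤ ∑ m, t m := by
    have h8 : ∑ _r : Fin k, (-δ) ≤ ∑ r, t r := Finset.sum_le_sum fun r _ => ht_lb r
    rw [Finset.sum_const, Finset.card_univ, Fintype.card_fin, nsmul_eq_mul] at h8
    linarith
  have ht_ub : ∀ m : Fin k, t m ≤ ((k:ℝ)+1) * δ := by
    intro m
    have h8 : ∑ _r ∈ Finset.univ.erase m, (-δ) ≤ ∑ r ∈ Finset.univ.erase m, t r :=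
      Finset.sum_le_sum (fun r _ => ht_lb r)
    rw [Finset.sum_const, nsmul_eq_mul] at h8
    have hcard : (((Finset.univ : Finset (Fin k)).erase m).card : ℝ) ≤ (k:ℝ) := by
      have h9 := Finset.card_erase_le (s := (Finset.univ : Finset (Fin k))) (a := m)
      rw [Finset.card_univ, Fintype.card_fin] at h9
      exact_mod_cast h9
    have h10 := Finset.sum_erase_add Finset.univ t (Finset.mem_univ m)
    have h12 := mul_le_mul_of_nonneg_right hcard hδpos.le
    have h11 : -((k:ℝ) * δ) ≤ ∑ r ∈ Finset.univ.erase m, t r := by linarith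
    linarith [hsum_le]
  have hcoordbd : ∀ j : Fin d, |x j - p j| ≤ ((k:ℝ)+2) * δ := by
    intro j
    by_cases hjS : j ∈ S
    · rw [hpS j hjS]
      simp only [sub_self, abs_zero]
      positivity
    · have hxj : x j = 0 := hx0 j hjS
      by_cases hjι : ∃ r, ι r = j
      · obtain ⟨r, rfl⟩ := hjι
        rcases Fin.eq_zero_or_eq_succ r with h0 | ⟨m, rfl⟩
        · subst h0
          have hple : p (ι 0) ≤ δ + (k:ℝ) * δ := by linarith [hsum_t, hsum_lb]
          have hlb := (hp01 (ι 0)).1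
          rw [hxj, abs_sub_comm]
          rw [abs_of_nonneg (by linarith : (0:ℝ) ≤ p (ι 0) - 0)]
          linarith
        · have hpm : p (ι m.succ) = δ + t m := by linarith [htm m]
          have hlb := (hp01 (ι m.succ)).1
          rw [hxj, abs_sub_comm]
          rw [abs_of_nonneg (by linarith : (0:ℝ) ≤ p (ι m.succ) - 0)]
          have := ht_ub m
          linarith
      · have h5 := hcoord j
        have h6 : ∀ r ∈ Finset.univ,
            t r * ((if j = ι r.succ then (1:ℝ) else 0) - (if j = ι 0 then 1 else 0)) = 0 := by
          intro r _
          have e1 : j ≠ ι r.succ := fun h => hjι ⟨r.succ, h.symm⟩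
          have e2 : j ≠ ι 0 := fun h => hjι ⟨0, h.symm⟩
          rw [if_neg e1, if_neg e2]; ring
        rw [Finset.sum_congr rfl h6, Finset.sum_const_zero] at h5
        have hqj : q j = δ := by rw [hqdef]; simp [hjS]
        have hpj : p j = δ := by linarith [h5, hqj]
        rw [hxj, hpj, abs_sub_comm]
        rw [abs_of_nonneg (by linarith : (0:ℝ) ≤ δ - 0)]
        linarith [hδpos.le]
  calc dist x p ≤ ∑ j, |x j - p j| := distLeSum x p
    _ ≤ ∑ _j : Fin d, ((k:ℝ)+2) * δ := Finset.sum_le_sum fun j _ => hcoordbd j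
    _ = (d:ℝ) * (((k:ℝ)+2) * δ) := by
        rw [Finset.sum_const, Finset.card_univ, Fintype.card_fin, nsmul_eq_mul]
    _ = A * δ := by rw [hA]; push_cast; ring
    _ < ε := hAδε


/-- `K` meets every coordinate cylinder over a base point of the cube. -/
lemma fiberHit {k : ℕ} (hk : k < d) (K : Set (EuclideanSpace ℝ (Fin d)))
    (hhit : ∀ V : AffineSubspace ℝ (EuclideanSpace ℝ (Fin d)), V ≠ ⊥ →
      finrank ℝ V.direction = k →
      ((V : Set _) ∩ unitCube d).Nonempty → (K ∩ (V : Set _)).Nonempty)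
    (y : EuclideanSpace ℝ (Fin d)) (hy : ∀ j : Fin d, k ≤ j.val → y j ∈ Icc (0:ℝ) 1) :
    ∃ p ∈ K, ∀ j : Fin d, k ≤ j.val → p j = y j := by
  classical
  set q : EuclideanSpace ℝ (Fin d) := WithLp.toLp 2 (fun j => if k ≤ j.val then y j else 0) with hqdef
  set c : Fin k → Fin d := fun r => ⟨r.val, r.2.trans hk⟩ with hcdef
  have hcval : ∀ r : Fin k, (c r).val = r.val := fun r => rfl
  set v : Fin k → EuclideanSpace ℝ (Fin d) := fun r => EuclideanSpace.single (c r) 1 with hvdef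
  have hvcoord : ∀ (r : Fin k) (j : Fin d), v r j = if j = c r then (1:ℝ) else 0 := by
    intro r j
    show (EuclideanSpace.single (c r) (1:ℝ)) j = _
    rw [EuclideanSpace.single_apply (𝕜 := ℝ)]
  have hli : LinearIndependent ℝ v := by
    apply liOfCoords v c
    intro r r'
    rw [hvcoord]
    have : (c r' = c r) ↔ (r = r') := by
      constructor
      · intro h
        have h2 : r'.val = r.val := congrArg (fun z : Fin d => z.val) h
        exact Fin.ext h2.symm
      · intro h; rw [h]
    by_cases hrr : r = r' <;> simp [hrr, this]
  set W : Submodule ℝ (EuclideanSpace ℝ (Fin d)) := Submodule.span ℝ (Set.range v) with hWdef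
  set V : AffineSubspace ℝ (EuclideanSpace ℝ (Fin d)) := AffineSubspace.mk' q W with hVdef
  have hqV : q ∈ V := AffineSubspace.self_mem_mk' q W
  have hVbot : V ≠ ⊥ := by
    intro h; rw [h] at hqV; exact absurd hqV (AffineSubspace.notMem_bot _ _ _)
  have hVrank : finrank ℝ V.direction = k := by
    rw [hVdef, AffineSubspace.direction_mk', hWdef, finrank_span_eq_card hli, Fintype.card_fin]
  have hqcube : q ∈ unitCube d := by
    intro j
    rw [hqdef]
    by_cases hj : k ≤ j.val
    · simpa [hj] using hy j hj
    · simp only [hj, if_false]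
      exact ⟨le_refl 0, zero_le_one⟩
  obtain ⟨p, hpK, hpV⟩ := hhit V hVbot hVrank ⟨q, hqV, hqcube⟩
  refine ⟨p, hpK, ?_⟩
  intro j hj
  rw [AffineSubspace.mem_coe, hVdef, AffineSubspace.mem_mk', hWdef] at hpV
  obtain ⟨t, ht⟩ := (Submodule.mem_span_range_iff_exists_fun ℝ).mp hpV
  have h2 := congrArg (fun z : EuclideanSpace ℝ (Fin d) => z j) ht
  simp only at h2
  rw [coordSum] at h2
  have h3 : ∀ r ∈ Finset.univ, (t r • v r) j = 0 := by
    intro r _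
    show t r * v r j = 0
    rw [hvcoord]
    have : j ≠ c r := by
      intro h
      have h6 : j.val = r.val := congrArg (fun z : Fin d => z.val) h
      omega
    rw [if_neg this, mul_zero]
  rw [Finset.sum_congr rfl h3, Finset.sum_const_zero] at h2
  have h4 : p j - q j = 0 := by
    rw [show p j - q j = (p -ᵥ q) j from rfl]; exact h2.symm
  have h5 : q j = y j := by rw [hqdef]; simp [hj]
  linarith


lemma projCont {k : ℕ} : Continuous (fun y : EuclideanSpace ℝ (Fin d) =>
    (WithLp.toLp 2 (fun j : Fin d => if k ≤ j.val then y j else 0) : EuclideanSpace ℝ (Fin d))) := by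
  apply (PiLp.continuous_toLp 2 (fun _ : Fin d => ℝ)).comp
  apply continuous_pi
  intro j
  by_cases h : k ≤ j.val
  · simp only [h, if_true]
    exact (PiLp.continuous_apply (p := 2) (β := fun _ : Fin d => ℝ) j)
  · simp only [h, if_false]
    exact continuous_const

/-- The key Baire-type refinement: we may pin all coordinates `< k` of fibered
points of `K` into fixed intervals of length `1/2`, over a small open base box. -/
lemma refineBox {k : ℕ} (hk : k < d) (K : Set (EuclideanSpace ℝ (Fin d)))
    (hcpt : IsCompact K) (hsub : K ⊆ unitCube d)
    (hfib : ∀ y : EuclideanSpace ℝ (Fin d),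
      (∀ j : Fin d, k ≤ j.val → y j ∈ Icc (0:ℝ) 1) →
      ∃ p ∈ K, ∀ j : Fin d, k ≤ j.val → p j = y j) :
    ∃ (a : Fin d → ℝ) (c : EuclideanSpace ℝ (Fin d)) (r : ℝ), 0 < r ∧
      ∀ y : EuclideanSpace ℝ (Fin d), (∀ j : Fin d, k ≤ j.val → |y j - c j| < r) →
        ∃ p ∈ K, (∀ j : Fin d, k ≤ j.val → p j = y j) ∧
          (∀ j : Fin d, j.val < k → p j ∈ Icc (a j) (a j + 1/2)) := by
  classical
  set π : EuclideanSpace ℝ (Fin d) → EuclideanSpace ℝ (Fin d) :=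
    fun y => WithLp.toLp 2 (fun j : Fin d => if k ≤ j.val then y j else 0) with hπdef
  have hπapp : ∀ (y : EuclideanSpace ℝ (Fin d)) (j : Fin d),
      π y j = if k ≤ j.val then y j else 0 := fun y j => rfl
  have hπeq : ∀ y z : EuclideanSpace ℝ (Fin d),
      π y = π z ↔ ∀ j : Fin d, k ≤ j.val → y j = z j := by
    intro y z
    constructor
    · intro h j hj
      have := congrArg (fun w : EuclideanSpace ℝ (Fin d) => w j) h
      simpa [hπapp, hj] using this
    · intro h
      ext j
      rw [hπapp, hπapp]
      by_cases hj : k ≤ j.val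
      · simp [hj, h j hj]
      · simp [hj]
  suffices main : ∀ n : ℕ, n ≤ k →
      ∃ (a : Fin d → ℝ) (c : EuclideanSpace ℝ (Fin d)) (r : ℝ), 0 < r ∧
        ∀ y : EuclideanSpace ℝ (Fin d), (∀ j : Fin d, k ≤ j.val → |y j - c j| < r) →
          ∃ p ∈ K, (∀ j : Fin d, k ≤ j.val → p j = y j) ∧
            (∀ j : Fin d, j.val < n → p j ∈ Icc (a j) (a j + 1/2)) by
    exact main k le_rfl
  intro n
  induction n with
  | zero =>
    intro _
    refine ⟨fun _ => 0, (WithLp.toLp 2 (fun _ => (1:ℝ)/2) : EuclideanSpace ℝ (Fin d)), 1/2, by norm_num, ?_⟩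
    intro y hy
    have hy' : ∀ j : Fin d, k ≤ j.val → y j ∈ Icc (0:ℝ) 1 := by
      intro j hj
      have := hy j hj
      have h2 : |y j - 1/2| < 1/2 := this
      rw [abs_lt] at h2
      constructor <;> linarith [h2.1, h2.2]
    obtain ⟨p, hpK, hpy⟩ := hfib y hy'
    exact ⟨p, hpK, hpy, fun j hj => absurd hj (Nat.not_lt_zero _)⟩
  | succ n ih =>
    intro hn1
    obtain ⟨a, c, r, hr, hinv⟩ := ih (Nat.le_of_succ_le hn1)
    have hnk : n < k := hn1
    set jn : Fin d := ⟨n, hnk.trans hk⟩ with hjndef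
    -- the two constrained compact pieces
    set KC : ℝ → Set (EuclideanSpace ℝ (Fin d)) := fun m =>
      K ∩ {p | ∀ j : Fin d, j.val < n → p j ∈ Icc (a j) (a j + 1/2)}
        ∩ {p | p jn ∈ Icc m (m + 1/2)} with hKCdef
    have hKCcpt : ∀ m, IsCompact (KC m) := by
      intro m
      apply IsCompact.inter_right
      apply IsCompact.inter_right hcpt
      · have : {p : EuclideanSpace ℝ (Fin d) | ∀ j : Fin d, j.val < n →
            p j ∈ Icc (a j) (a j + 1/2)} = ⋂ j : Fin d,
            {p : EuclideanSpace ℝ (Fin d) | j.val < n → p j ∈ Icc (a j) (a j + 1/2)} := by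
          ext p; simp [Set.mem_iInter]
        rw [this]
        apply isClosed_iInter
        intro j
        by_cases hj : j.val < n
        · have : {p : EuclideanSpace ℝ (Fin d) | j.val < n → p j ∈ Icc (a j) (a j + 1/2)}
              = (fun p : EuclideanSpace ℝ (Fin d) => p j) ⁻¹' (Icc (a j) (a j + 1/2)) := by
            ext p; simp [hj]
          rw [this]
          exact isClosed_Icc.preimage (PiLp.continuous_apply (p := 2) (β := fun _ : Fin d => ℝ) j)
        · have : {p : EuclideanSpace ℝ (Fin d) | j.val < n → p j ∈ Icc (a j) (a j + 1/2)}
              = Set.univ := by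
            ext p; simp [hj]
          rw [this]
          exact isClosed_univ
      · exact isClosed_Icc.preimage (PiLp.continuous_apply (p := 2) (β := fun _ : Fin d => ℝ) jn)
    set S : ℝ → Set (EuclideanSpace ℝ (Fin d)) := fun m => π ⁻¹' (π '' (KC m)) with hSdef
    have hScl : ∀ m, IsClosed (S m) :=
      fun m => (((hKCcpt m).image projCont).isClosed).preimage projCont
    have hSmem : ∀ m y, y ∈ S m ↔ ∃ p ∈ KC m, ∀ j : Fin d, k ≤ j.val → p j = y j := by
      intro m y
      constructor
      · rintro ⟨p, hp, hpy⟩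
        exact ⟨p, hp, (hπeq p y).mp hpy⟩
      · rintro ⟨p, hp, hpy⟩
        exact ⟨p, hp, (hπeq p y).mpr hpy⟩
    set U : Set (EuclideanSpace ℝ (Fin d)) :=
      {y | ∀ j : Fin d, k ≤ j.val → |y j - c j| < r} with hUdef
    have hUopen : IsOpen U := by
      have : U = ⋂ j : Fin d, {y : EuclideanSpace ℝ (Fin d) | k ≤ j.val → |y j - c j| < r} := by
        ext y; simp [hUdef, Set.mem_iInter]
      rw [this]
      apply isOpen_iInter_of_finite
      intro j
      by_cases hj : k ≤ j.val
      · have : {y : EuclideanSpace ℝ (Fin d) | k ≤ j.val → |y j - c j| < r}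
            = {y : EuclideanSpace ℝ (Fin d) | |y j - c j| < r} := by
          ext y; simp [hj]
        rw [this]
        have hcont : Continuous (fun y : EuclideanSpace ℝ (Fin d) => |y j - c j|) :=
          ((PiLp.continuous_apply (p := 2) (β := fun _ : Fin d => ℝ) j).sub continuous_const).abs
        exact isOpen_lt hcont continuous_const
      · have : {y : EuclideanSpace ℝ (Fin d) | k ≤ j.val → |y j - c j| < r} = Set.univ := by
          ext y; simp [hj]
        rw [this]
        exact isOpen_univ
    have hUsub : U ⊆ S 0 ∪ S (1/2) := by
      intro y hy
      obtain ⟨p, hpK, hpy, hpa⟩ := hinv y hy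
      have hp01 : p jn ∈ Icc (0:ℝ) 1 := hsub hpK jn
      by_cases hhalf : p jn ≤ 1/2
      · left
        rw [hSmem]
        exact ⟨p, ⟨⟨hpK, hpa⟩, ⟨hp01.1, by linarith⟩⟩, hpy⟩
      · right
        rw [hSmem]
        refine ⟨p, ⟨⟨hpK, hpa⟩, ⟨by linarith, by linarith [hp01.2]⟩⟩, hpy⟩
    have hcU : c ∈ U := by
      intro j hj
      simpa using hr
    -- dichotomy: one of the two closed sets has nonempty interior
    have hdich : (interior (S 0)).Nonempty ∨ (interior (S (1/2))).Nonempty := by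
      by_contra hcon
      push_neg at hcon
      obtain ⟨h0, h1⟩ := hcon
      by_cases hcase : (U \ S 0).Nonempty
      · have hop : IsOpen (U \ S 0) := hUopen.sdiff (hScl 0)
        have hsub2 : U \ S 0 ⊆ S (1/2) := by
          intro y hy
          rcases hUsub hy.1 with h | h
          · exact absurd h hy.2
          · exact h
        have := interior_maximal hsub2 hop
        obtain ⟨y, hy⟩ := hcase
        have : y ∈ interior (S (1/2)) := this hy
        rw [h1] at this
        exact this
      · rw [Set.not_nonempty_iff_eq_empty, Set.diff_eq_empty] at hcase
        have := interior_maximal hcase hUopen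
        have : c ∈ interior (S 0) := this hcU
        rw [h0] at this
        exact this
    -- extract m
    obtain ⟨m, hm, hint⟩ : ∃ m : ℝ, (m = 0 ∨ m = 1/2) ∧ (interior (S m)).Nonempty := by
      rcases hdich with h | h
      · exact ⟨0, Or.inl rfl, h⟩
      · exact ⟨1/2, Or.inr rfl, h⟩
    obtain ⟨c', hc'⟩ := hint
    obtain ⟨r', hr', hball⟩ := Metric.isOpen_iff.mp isOpen_interior c' hc'
    have hballS : Metric.ball c' r' ⊆ S m := hball.trans interior_subset
    -- the new data
    refine ⟨fun j => if j.val = n then m else a j, c', r' / ((d:ℝ) + 1),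
      div_pos hr' (by positivity), ?_⟩
    intro y hy
    set z : EuclideanSpace ℝ (Fin d) :=
      WithLp.toLp 2 (fun j : Fin d => if k ≤ j.val then y j else c' j) with hzdef
    have hzball : z ∈ Metric.ball c' r' := by
      rw [Metric.mem_ball, EuclideanSpace.dist_eq]
      have hterm : ∀ j : Fin d, dist (z j) (c' j) ^ 2 ≤ (r' / ((d:ℝ)+1))^2 := by
        intro j
        by_cases hj : k ≤ j.val
        · have hzj : z j = y j := by rw [hzdef]; simp [hj]
          rw [hzj, Real.dist_eq]
          exact pow_le_pow_left₀ (abs_nonneg _) (hy j hj).le 2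
        · have hzj : z j = c' j := by rw [hzdef]; simp [hj]
          rw [hzj, dist_self]
          simpa using sq_nonneg (r' / ((d:ℝ)+1))
      have hsum : ∑ j, dist (z j) (c' j) ^ 2 ≤ (d:ℝ) * (r' / ((d:ℝ)+1))^2 := by
        calc ∑ j, dist (z j) (c' j)^2 ≤ ∑ _j : Fin d, (r' / ((d:ℝ)+1))^2 :=
              Finset.sum_le_sum fun j _ => hterm j
          _ = (d:ℝ) * (r' / ((d:ℝ)+1))^2 := by
              rw [Finset.sum_const, Finset.card_univ, Fintype.card_fin, nsmul_eq_mul]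
      have hlt : (d:ℝ) * (r' / ((d:ℝ)+1))^2 < r' ^ 2 := by
        rw [div_pow, mul_div_assoc', div_lt_iff₀ (by positivity : (0:ℝ) < ((d:ℝ)+1)^2)]
        have key : r'^2 * ((d:ℝ)+1)^2 - (d:ℝ)*r'^2 = r'^2 * ((d:ℝ)^2 + (d:ℝ) + 1) := by ring
        have hpos : (0:ℝ) < r'^2 * ((d:ℝ)^2 + (d:ℝ) + 1) :=
          mul_pos (pow_pos hr' 2) (by positivity)
        linarith
      calc Real.sqrt (∑ j, dist (z j) (c' j)^2)
          ≤ Real.sqrt ((d:ℝ) * (r'/((d:ℝ)+1))^2) := Real.sqrt_le_sqrt hsum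
        _ < Real.sqrt (r'^2) := Real.sqrt_lt_sqrt (by positivity) hlt
        _ = r' := Real.sqrt_sq hr'.le
    have hzS := hballS hzball
    rw [hSmem] at hzS
    obtain ⟨p, hpKC, hpz⟩ := hzS
    obtain ⟨⟨hpK, hpa⟩, hpjn⟩ := hpKC
    refine ⟨p, hpK, ?_, ?_⟩
    · intro j hj
      rw [hpz j hj, hzdef]
      simp [hj]
    · intro j hj
      show p j ∈ Icc (if (j:ℕ) = n then m else a j) ((if (j:ℕ) = n then m else a j) + 1/2)
      by_cases hjn : j.val = n
      · have hje : j = jn := Fin.ext hjn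
        rw [if_pos hjn, hje]
        exact hpjn
      · have hjlt : j.val < n := by omega
        simp only [hjn, if_false]
        exact hpa j hjlt

end NonexAux

/-- If an `(ℓ,k,d)`-set exists then `k > ((ℓ-1)/ℓ)·(d-1)`. -/
theorem nonexistence (d k ℓ : ℕ) (hd : 2 ≤ d) (hk : k < d) (hℓ : 2 ≤ ℓ)
    (K : Set (EuclideanSpace ℝ (Fin d))) (hcpt : IsCompact K) (hsub : K ⊆ unitCube d)
    (hhit : ∀ V : AffineSubspace ℝ (EuclideanSpace ℝ (Fin d)), V ≠ ⊥ →
      finrank ℝ V.direction = k →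
      ((V : Set _) ∩ unitCube d).Nonempty → (K ∩ (V : Set _)).Nonempty)
    (hnwd : IsNowhereDense (msum ℓ K)) :
    ((ℓ : ℝ) - 1) / ℓ * ((d : ℝ) - 1) < k := by
  classical
  by_cases harith : (ℓ - 1) * (d - 1) < ℓ * k
  · have h1 : (0:ℝ) < (ℓ:ℝ) := by positivity
    rw [div_mul_eq_mul_div, div_lt_iff₀ h1]
    calc ((ℓ:ℝ) - 1) * ((d:ℝ) - 1) = (((ℓ-1)*(d-1) : ℕ) : ℝ) := by
          rw [Nat.cast_mul, Nat.cast_sub (by omega : 1 ≤ ℓ), Nat.cast_sub (by omega : 1 ≤ d)]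
          norm_num
      _ < ((ℓ*k : ℕ) : ℝ) := by exact_mod_cast harith
      _ = (k:ℝ) * (ℓ:ℝ) := by push_cast; ring
  · exfalso
    push_neg at harith
    obtain ⟨L, rfl⟩ : ∃ L, ℓ = L + 1 := ⟨ℓ - 1, by omega⟩
    have hL : 1 ≤ L := by omega
    set q : ℕ := d - 1 - k with hq
    -- k + 2 ≤ d, so q ≥ 1
    have hk2 : k + 2 ≤ d := by
      by_contra hcon
      have hkd : k = d - 1 := by omega
      rw [hkd] at harith
      have hd1 : 0 < d - 1 := by omega
      have := Nat.le_of_mul_le_mul_right (by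
        calc (L+1) * (d-1) ≤ L * (d-1) := harith
        ) hd1
      omega
    have hq1 : 1 ≤ q := by omega
    have hkLq : k ≤ L * q := by
      have h3 : L * (d-1) = L * k + L * q := by
        rw [hq, ← Nat.mul_add]
        congr 1
        omega
      have h4 : L * k + k ≤ L * k + L * q := by
        calc L * k + k = (L+1) * k := by ring
          _ ≤ L * (d-1) := harith
          _ = L * k + L * q := h3
      exact Nat.le_of_add_le_add_left h4
    obtain ⟨a, c, r, hr, hinv⟩ := NonexAux.refineBox hk K hcpt hsub
      (fun y hy => NonexAux.fiberHit hk K hhit y hy)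
    -- the open set contained in the sumset
    set O : Set (EuclideanSpace ℝ (Fin d)) :=
      {x | ∀ j : Fin d, (k ≤ j.val → |x j - c j| < r) ∧
        (j.val < k → x j ∈ Ioo (a j + 1/2) (a j + 1))} with hOdef
    have hOopen : IsOpen O := by
      have : O = ⋂ j : Fin d, ({x : EuclideanSpace ℝ (Fin d) | k ≤ j.val → |x j - c j| < r} ∩
          {x : EuclideanSpace ℝ (Fin d) | j.val < k → x j ∈ Ioo (a j + 1/2) (a j + 1)}) := by
        ext x
        simp [hOdef, Set.mem_iInter, forall_and]
      rw [this]
      apply isOpen_iInter_of_finite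
      intro j
      apply IsOpen.inter
      · by_cases hj : k ≤ j.val
        · have he : {x : EuclideanSpace ℝ (Fin d) | k ≤ j.val → |x j - c j| < r}
              = {x : EuclideanSpace ℝ (Fin d) | |x j - c j| < r} := by
            ext x; simp [hj]
          rw [he]
          have hcont : Continuous (fun x : EuclideanSpace ℝ (Fin d) => |x j - c j|) :=
            ((PiLp.continuous_apply (p := 2) (β := fun _ : Fin d => ℝ) j).sub continuous_const).abs
          exact isOpen_lt hcont continuous_const
        · have he : {x : EuclideanSpace ℝ (Fin d) | k ≤ j.val → |x j - c j| < r} = Set.univ := by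
            ext x; simp [hj]
          rw [he]; exact isOpen_univ
      · by_cases hj : j.val < k
        · have he : {x : EuclideanSpace ℝ (Fin d) | j.val < k → x j ∈ Ioo (a j + 1/2) (a j + 1)}
              = (fun x : EuclideanSpace ℝ (Fin d) => x j) ⁻¹' (Ioo (a j + 1/2) (a j + 1)) := by
            ext x; simp [hj]
          rw [he]
          exact isOpen_Ioo.preimage (PiLp.continuous_apply (p := 2) (β := fun _ : Fin d => ℝ) j)
        · have he : {x : EuclideanSpace ℝ (Fin d) | j.val < k → x j ∈ Ioo (a j + 1/2) (a j + 1)}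
              = Set.univ := by
            ext x; simp [hj]
          rw [he]; exact isOpen_univ
    have hOne : O.Nonempty := by
      refine ⟨WithLp.toLp 2 (fun j : Fin d => if k ≤ j.val then c j else a j + 3/4), ?_⟩
      intro j
      constructor
      · intro hj
        simp only [hj, if_true]
        simpa using hr
      · intro hj
        have hj2 : ¬ (k ≤ j.val) := by omega
        simp only [hj2, if_false]
        constructor <;> [linarith; linarith]
    have hOsub : O ⊆ msum (L+1) K := by
      intro x hx
      obtain ⟨p, hpK, hpbase, hpa⟩ := hinv x (fun j hj => (hx j).1 hj)
      set g : Fin L → EuclideanSpace ℝ (Fin d) := fun i =>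
        WithLp.toLp 2 (fun j : Fin d => if j.val < k ∧ j.val / q = i.val then x j - p j else 0) with hgdef
      have hgapp : ∀ (i : Fin L) (j : Fin d),
          g i j = if j.val < k ∧ j.val / q = i.val then x j - p j else 0 := fun i j => rfl
      have hgK : ∀ i, g i ∈ K := by
        intro i
        set Si : Finset (Fin d) :=
          Finset.univ.filter (fun j : Fin d => j.val < k ∧ j.val / q = i.val) with hSidef
        have hSicard : Si.card ≤ q := by
          have hinj : Set.InjOn (fun j : Fin d => j.val - i.val * q) Si := by
            intro j1 h1 j2 h2 he
            simp only [hSidef, Finset.coe_filter, Set.mem_setOf_eq, Finset.mem_univ,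
              true_and] at h1 h2
            have hl1 : i.val * q ≤ j1.val := by
              have := Nat.div_mul_le_self j1.val q
              rw [h1.2] at this
              exact this
            have hl2 : i.val * q ≤ j2.val := by
              have := Nat.div_mul_le_self j2.val q
              rw [h2.2] at this
              exact this
            have he2 : j1.val - i.val * q = j2.val - i.val * q := he
            have : j1.val = j2.val := by omega
            exact Fin.ext this
          have hmaps : ∀ j ∈ Si, (fun j : Fin d => j.val - i.val * q) j ∈ Finset.range q := by
            intro j hj
            simp only [hSidef, Finset.mem_filter, Finset.mem_univ, true_and] at hj
            have hl : i.val * q ≤ j.val := by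
              have := Nat.div_mul_le_self j.val q
              rw [hj.2] at this
              exact this
            have hu : j.val < (i.val + 1) * q := by
              rw [← Nat.div_lt_iff_lt_mul (by omega : 0 < q), hj.2]
              omega
            simp only [Finset.mem_range]
            have : (i.val + 1) * q = i.val * q + q := by ring
            omega
          calc Si.card ≤ (Finset.range q).card :=
                Finset.card_le_card_of_injOn _ hmaps hinj
            _ = q := Finset.card_range q
        apply NonexAux.faceSub hk K hcpt hsub hhit Si (by omega)
        · intro j hj
          simp only [hSidef, Finset.mem_filter, Finset.mem_univ, true_and] at hj
          rw [hgapp, if_pos hj]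
          have h5 := (hx j).2 hj.1
          have h6 := hpa j hj.1
          constructor
          · linarith [h5.1, h6.2]
          · linarith [h5.2, h6.1]
        · intro j hj
          simp only [hSidef, Finset.mem_filter, Finset.mem_univ, true_and] at hj
          rw [hgapp, if_neg hj]
      refine ⟨Fin.cons p g, ?_, ?_⟩
      · intro i
        refine Fin.cases ?_ ?_ i
        · rw [Fin.cons_zero]; exact hpK
        · intro i2; rw [Fin.cons_succ]; exact hgK i2
      · rw [Fin.sum_cons]
        ext j
        show p j + (∑ i, g i) j = x j
        rw [NonexAux.coordSum]
        by_cases hjk : j.val < k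
        · have hdivlt : j.val / q < L := by
            rw [Nat.div_lt_iff_lt_mul (by omega : 0 < q)]
            exact lt_of_lt_of_le hjk hkLq
          rw [Finset.sum_eq_single (⟨j.val / q, hdivlt⟩ : Fin L)]
          · rw [hgapp, if_pos ⟨hjk, rfl⟩]
            ring
          · intro b _ hb
            rw [hgapp]
            apply if_neg
            rintro ⟨h1, h2⟩
            exact hb (Fin.ext h2.symm)
          · intro habs
            exact absurd (Finset.mem_univ _) habs
        · have hzero : ∀ i ∈ Finset.univ, g i j = 0 := by
            intro i _
            rw [hgapp]
            apply if_neg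
            rintro ⟨h1, _⟩
            exact hjk h1
          rw [Finset.sum_congr rfl hzero, Finset.sum_const_zero]
          rw [hpbase j (by omega)]
          ring
    have h1 : O ⊆ closure (msum (L+1) K) := hOsub.trans subset_closure
    have h2 : O ⊆ interior (closure (msum (L+1) K)) := interior_maximal h1 hOopen
    obtain ⟨x₀, hx₀⟩ := hOne
    have h3 : interior (closure (msum (L+1) K)) = ∅ := hnwd
    have := h2 hx₀
    rw [h3] at this
    exact this
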